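/- For any monoids M₀ and M₁, the class of languages accepted by valence automata over the free product M₀ * M₁ is contained in the algebraic extension of VA(M₀) ∪ VA(M₁), i.e., VA(M₀ * M₁) ⊆ Alg(VA(M₀) ∪ VA(M₁)). -/

import Mathlib

/-- Languages over the universal alphabet `ℕ`. -/
abbrev Lang := Set (List ℕ)

/-- A valence automaton over a monoid `M`: a finite set of states, finitely
many edges labeled by a word over the input alphabet and an element of `M`,
an initial state and a set of final states. -/
structure VAut (M : Type*) [Monoid M] where
  Q : Type
  [fin : Fintype Q]
  edges : List (Q × List ℕ × M × Q)
  init : Q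
  final : Q → Prop

/-- Runs of a valence automaton: `Run A q w m` holds if the automaton can go
from the initial state to state `q`, reading the word `w` and multiplying the
monoid labels to `m`. -/
inductive VAut.Run {M : Type*} [Monoid M] (A : VAut M) : A.Q → List ℕ → M → Prop
  | nil : VAut.Run A A.init [] 1
  | step {q w m} {e : A.Q × List ℕ × M × A.Q} (he : e ∈ A.edges)
      (h : VAut.Run A q w m) (hq : e.1 = q) :
      VAut.Run A e.2.2.2 (w ++ e.2.1) (m * e.2.2.1)

/-- The language accepted by a valence automaton: words read by runs reaching a
final state with monoid value `1`. -/
def VAut.lang {M : Type*} [Monoid M] (A : VAut M) : Lang :=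
  {w | ∃ q, A.final q ∧ VAut.Run A q w 1}

/-- `VA M`: the class of languages accepted by valence automata over `M`. -/
def VA (M : Type*) [Monoid M] : Set Lang := {L | ∃ A : VAut M, L = A.lang}
/-- A grammar with language right-hand sides: nonterminals are a finite set of
symbols of the universal alphabet `ℕ`, and each production `A → L` rewrites the
nonterminal `A` to any word of the language `L` (over terminals and
nonterminals). -/
structure CGram where
  NT : Finset ℕ
  start : ℕ
  startMem : start ∈ NT
  prods : List (ℕ × Lang)
  lhsMem : ∀ p ∈ prods, p.1 ∈ NT

/-- One derivation step of a `CGram`. -/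
def CGram.step (G : CGram) (u v : List ℕ) : Prop :=
  ∃ x z w p, p ∈ G.prods ∧ w ∈ p.2 ∧ u = x ++ [p.1] ++ z ∧ v = x ++ w ++ z

/-- The language generated by a `CGram`: terminal words derivable from the
start symbol. -/
def CGram.lang (G : CGram) : Lang :=
  {w | Relation.ReflTransGen G.step [G.start] w ∧ ∀ a ∈ w, a ∉ G.NT}

/-- `Alg C`: the algebraic extension of a language class `C`, i.e. the
languages generated by grammars all of whose production right-hand sides lie in
`C`. -/
def Alg (C : Set Lang) : Set Lang :=
  {L | ∃ G : CGram, (∀ p ∈ G.prods, p.2 ∈ C) ∧ L = G.lang}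

/-! ### Generic path runs -/

section PRun

variable {σ : Type*} {M : Type*} [Monoid M]

inductive PRun (E : List (σ × List ℕ × M × σ)) : σ → List ℕ → M → σ → Prop
  | nil (p : σ) : PRun E p [] 1 p
  | step {p w m q} (h : PRun E p w m q) {e : σ × List ℕ × M × σ} (he : e ∈ E)
      (hq : e.1 = q) : PRun E p (w ++ e.2.1) (m * e.2.2.1) e.2.2.2

theorem PRun.append {E : List (σ × List ℕ × M × σ)} {p w m q v n r}
    (h1 : PRun E p w m q) (h2 : PRun E q v n r) : PRun E p (w ++ v) (m * n) r := by
  induction h2 with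
  | nil => simpa using h1
  | step h e hq ih =>
    have := ih.step e hq
    simpa [mul_assoc] using this

theorem PRun.single {E : List (σ × List ℕ × M × σ)} {e : σ × List ℕ × M × σ}
    (he : e ∈ E) : PRun E e.1 e.2.1 e.2.2.1 e.2.2.2 := by
  have := (PRun.nil (E := E) e.1).step he rfl
  simpa using this

theorem PRun.cons {E : List (σ × List ℕ × M × σ)} {e : σ × List ℕ × M × σ}
    (he : e ∈ E) {v n r} (h : PRun E e.2.2.2 v n r) :
    PRun E e.1 (e.2.1 ++ v) (e.2.2.1 * n) r :=
  (PRun.single he).append h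

theorem vaut_run_iff_prun {A : VAut M} {q w m} :
    A.Run q w m ↔ PRun A.edges A.init w m q := by
  constructor
  · intro h
    induction h with
    | nil => exact PRun.nil _
    | step he h hq ih => exact ih.step he hq
  · intro h
    generalize hp : A.init = p at h
    induction h with
    | nil => exact hp ▸ VAut.Run.nil
    | step h he hq ih => exact VAut.Run.step he ih hq

theorem vaut_mem_lang_iff {A : VAut M} {w} :
    w ∈ A.lang ↔ ∃ q, A.final q ∧ PRun A.edges A.init w 1 q := by
  unfold VAut.lang
  simp only [Set.mem_setOf_eq, vaut_run_iff_prun]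

/-- letters appearing in words of edges -/
theorem PRun.letters {E : List (σ × List ℕ × M × σ)} {p w m q} (h : PRun E p w m q)
    {P : ℕ → Prop} (hE : ∀ e ∈ E, ∀ a ∈ e.2.1, P a) : ∀ a ∈ w, P a := by
  induction h with
  | nil => simp
  | step h he hq ih =>
    intro a ha
    rcases List.mem_append.1 ha with h' | h'
    · exact ih a h'
    · exact hE _ he a h'

end PRun

open Monoid

section Alg2

variable {M₀ M₁ : Type} [Monoid M₀] [Monoid M₁]

/-- The Bool-indexed family for transferring to `CoprodI`. -/
def Fb (M₀ M₁ : Type) : Bool → Type := fun b => cond b M₁ M₀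

instance instFbMonoid : ∀ b : Bool, Monoid (Fb M₀ M₁ b)
  | false => ‹Monoid M₀›
  | true => ‹Monoid M₁›

noncomputable def phiC : Monoid.Coprod M₀ M₁ →* Monoid.CoprodI (Fb M₀ M₁) :=
  Monoid.Coprod.lift (Monoid.CoprodI.of (M := Fb M₀ M₁) (i := false))
    (Monoid.CoprodI.of (M := Fb M₀ M₁) (i := true))

theorem alt_exists_one (l : List (Bool × Monoid.Coprod M₀ M₁)) (hne : l ≠ [])
    (hpure : ∀ s ∈ l, (s.1 = false → ∃ a, s.2 = Monoid.Coprod.inl a) ∧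
      (s.1 = true → ∃ b, s.2 = Monoid.Coprod.inr b))
    (hchain : (l.map Prod.fst).Chain' (· ≠ ·))
    (hprod : (l.map Prod.snd).prod = 1) : ∃ s ∈ l, s.2 = 1 := by
  classical
  by_contra hcon
  push_neg at hcon
  -- build a reduced word
  let sig : Bool × Monoid.Coprod M₀ M₁ → Σ b, Fb M₀ M₁ b := fun s =>
    match s with
    | (false, v) => ⟨false, (Monoid.Coprod.fst v : M₀)⟩
    | (true, v) => ⟨true, (Monoid.Coprod.snd v : M₁)⟩
  have hsig_fst : ∀ s, (sig s).1 = s.1 := by rintro ⟨b, v⟩; cases b <;> rfl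
  have hrep : ∀ s ∈ l, phiC s.2 = Monoid.CoprodI.of (sig s).2 := by
    rintro ⟨b, v⟩ hs
    rcases hpure _ hs with ⟨h0, h1⟩
    cases b with
    | false =>
      rcases h0 rfl with ⟨a, rfl⟩
      show phiC (Monoid.Coprod.inl a) = _
      rw [phiC]
      exact Monoid.Coprod.lift_apply_inl _ _ a
    | true =>
      rcases h1 rfl with ⟨b', rfl⟩
      show phiC (Monoid.Coprod.inr b') = _
      rw [phiC]
      exact Monoid.Coprod.lift_apply_inr _ _ b'
  have hne_one : ∀ p ∈ l.map sig, p.2 ≠ (1 : Fb M₀ M₁ p.1) := by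
    intro p hp
    rcases List.mem_map.1 hp with ⟨s, hs, rfl⟩
    rcases hpure _ hs with ⟨h0, h1⟩
    rcases s with ⟨b, v⟩
    cases b with
    | false =>
      rcases h0 rfl with ⟨a, rfl⟩
      intro h
      apply hcon _ hs
      show Monoid.Coprod.inl a = 1
      have ha : a = 1 := by simp [sig] at h; exact h
      rw [ha, map_one]
    | true =>
      rcases h1 rfl with ⟨b', rfl⟩
      intro h
      apply hcon _ hs
      show Monoid.Coprod.inr b' = 1
      have hb : b' = 1 := by simp [sig] at h; exact h
      rw [hb, map_one]
  have hchain' : (l.map sig).Chain' (fun x y => x.1 ≠ y.1) := by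
    show List.IsChain _ _
    rw [List.isChain_map]
    replace hchain : List.IsChain _ _ := hchain
    rw [List.isChain_map] at hchain
    refine hchain.imp ?_
    intro a b h
    simpa [hsig_fst] using h
  let w : Monoid.CoprodI.Word (Fb M₀ M₁) :=
    ⟨l.map sig, hne_one, hchain'⟩
  have hw : w.prod = 1 := by
    show ((l.map sig).map fun p => Monoid.CoprodI.of p.2).prod = 1
    have : ((l.map sig).map fun p => Monoid.CoprodI.of p.2)
        = (l.map Prod.snd).map phiC := by
      rw [List.map_map, List.map_map]
      refine List.map_congr_left ?_
      intro s hs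
      exact (hrep s hs).symm
    rw [this, ← map_list_prod, hprod, map_one]
  letI : ∀ b, DecidableEq (Fb M₀ M₁ b) := fun _ => Classical.decEq _
  letI : DecidableEq Bool := instDecidableEqBool
  have hinj : Function.Injective (Monoid.CoprodI.Word.prod (M := Fb M₀ M₁)) :=
    (Monoid.CoprodI.Word.equiv (M := Fb M₀ M₁)).symm.injective
  have : w = Monoid.CoprodI.Word.empty := by
    apply hinj
    rw [hw, Monoid.CoprodI.Word.prod_empty]
  have : l.map sig = [] := congrArg Monoid.CoprodI.Word.toList this
  simp at this
  exact hne this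

/-- syllables -/
theorem exists_syl (m : Monoid.Coprod M₀ M₁) :
    ∃ l : List (M₀ ⊕ M₁), ((l.map (Sum.elim Monoid.Coprod.inl Monoid.Coprod.inr)).prod
      : Monoid.Coprod M₀ M₁) = m := by
  induction m using Monoid.Coprod.induction_on with
  | inl m => exact ⟨[Sum.inl m], by simp⟩
  | inr n => exact ⟨[Sum.inr n], by simp⟩
  | mul x y hx hy =>
    rcases hx with ⟨lx, hx⟩
    rcases hy with ⟨ly, hy⟩
    exact ⟨lx ++ ly, by simp [hx, hy]⟩

end Alg2
open Monoid

section Part3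
variable {M₀ M₁ : Type} [Monoid M₀] [Monoid M₁]

theorem exists_syl' (m : Monoid.Coprod M₀ M₁) :
    ∃ l : List (M₀ ⊕ M₁), ((l.map (Sum.elim Monoid.Coprod.inl Monoid.Coprod.inr)).prod
      : Monoid.Coprod M₀ M₁) = m := by
  induction m using Monoid.Coprod.induction_on with
  | inl m => exact ⟨[Sum.inl m], by simp⟩
  | inr n => exact ⟨[Sum.inr n], by simp⟩
  | mul x y hx hy =>
    rcases hx with ⟨lx, hx⟩
    rcases hy with ⟨ly, hy⟩
    exact ⟨lx ++ ly, by simp [hx, hy]⟩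

/-- value of a syllable -/
def vS : M₀ ⊕ M₁ → Monoid.Coprod M₀ M₁ := Sum.elim Monoid.Coprod.inl Monoid.Coprod.inr

def prodC (l : List (M₀ ⊕ M₁)) : Monoid.Coprod M₀ M₁ := (l.map vS).prod

@[simp] theorem prodC_nil : prodC ([] : List (M₀ ⊕ M₁)) = 1 := rfl
@[simp] theorem prodC_cons (a : M₀ ⊕ M₁) (l) : prodC (a :: l) = vS a * prodC l := by
  simp [prodC]

noncomputable def syl (m : Monoid.Coprod M₀ M₁) : List (M₀ ⊕ M₁) :=
  (exists_syl' m).choose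

theorem prodC_syl (m : Monoid.Coprod M₀ M₁) : prodC (syl m) = m :=
  (exists_syl' m).choose_spec

theorem le_foldr_max {l : List ℕ} {a : ℕ} (h : a ∈ l) : a ≤ l.foldr max 0 := by
  induction l with
  | nil => simp at h
  | cons b l ih =>
    rcases List.mem_cons.1 h with rfl | h'
    · exact le_max_left _ _
    · exact le_trans (ih h') (le_max_right _ _)

variable (A : VAut (Monoid.Coprod M₀ M₁))

instance instVAutQFin {M : Type*} [Monoid M] (A : VAut M) : Fintype A.Q := A.fin

/-- syllable list of the `k`-th edge -/
noncomputable def sylsOf (k : Fin A.edges.length) : List (M₀ ⊕ M₁) :=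
  syl (A.edges.get k).2.2.1

/-- bound on syllable lengths -/
noncomputable def NB : ℕ := (A.edges.map (fun e => (syl e.2.2.1).length)).foldr max 0

theorem sylsOf_le (k : Fin A.edges.length) : (sylsOf A k).length ≤ NB A :=
  le_foldr_max (List.mem_map.2 ⟨A.edges.get k, List.get_mem _ _, rfl⟩)

/-- states of the normalized system: original states plus chain states -/
def QN := A.Q ⊕ (Fin A.edges.length × Fin (NB A + 1))

noncomputable instance : Fintype (QN A) := by
  unfold QN; infer_instance

/-- virtual chain state -/
noncomputable def vst (k : Fin A.edges.length) (t : ℕ) : QN A :=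
  Sum.inr (k, ⟨min t (NB A), by omega⟩)

/-- the `t`-th node on the chain of edge `k` -/
noncomputable def node (k : Fin A.edges.length) (t : ℕ) : QN A :=
  if t = 0 then Sum.inl (A.edges.get k).1
  else if (sylsOf A k).length ≤ t then Sum.inl (A.edges.get k).2.2.2
  else vst A k t

/-- the chain of syllable edges replacing edge `k` -/
noncomputable def chainOf (k : Fin A.edges.length) :
    List (QN A × List ℕ × (M₀ ⊕ M₁) × QN A) :=
  if (sylsOf A k).length = 0 then
    [(Sum.inl (A.edges.get k).1, (A.edges.get k).2.1, Sum.inl (1 : M₀),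
      Sum.inl (A.edges.get k).2.2.2)]
  else (List.range (sylsOf A k).length).map fun t =>
    (node A k t, if t = 0 then (A.edges.get k).2.1 else [],
      (sylsOf A k).getD t (Sum.inl 1), node A k (t + 1))

/-- syllable-labelled normalized edges -/
noncomputable def nedgesS : List (QN A × List ℕ × (M₀ ⊕ M₁) × QN A) :=
  (List.finRange A.edges.length).flatMap (chainOf A)

/-- coproduct-labelled normalized edges -/
noncomputable def nedges : List (QN A × List ℕ × Monoid.Coprod M₀ M₁ × QN A) :=
  (nedgesS A).map fun e => (e.1, e.2.1, vS e.2.2.1, e.2.2.2)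

theorem mem_nedgesS {e} : e ∈ nedgesS A ↔ ∃ k, e ∈ chainOf A k := by
  simp [nedgesS, List.mem_flatMap, List.mem_finRange]

theorem mem_nedges_of_memS {e} (he : e ∈ nedgesS A) :
    (e.1, e.2.1, vS e.2.2.1, e.2.2.2) ∈ nedges A :=
  List.mem_map.2 ⟨e, he, rfl⟩

theorem prodC_take_succ (s : List (M₀ ⊕ M₁)) (t : ℕ) (ht : t < s.length) :
    prodC (s.take (t + 1)) = prodC (s.take t) * vS (s.getD t (Sum.inl 1)) := by
  have h' : t < (s.map vS).length := by simpa using ht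
  rw [List.getD_eq_getElem _ _ ht]
  unfold prodC
  rw [List.map_take, List.map_take, List.prod_take_succ _ _ h']
  simp

theorem prodC_drop_eq (s : List (M₀ ⊕ M₁)) (t : ℕ) (ht : t < s.length) :
    prodC (s.drop t) = vS (s.getD t (Sum.inl 1)) * prodC (s.drop (t + 1)) := by
  rw [List.getD_eq_getElem _ _ ht, List.drop_eq_getElem_cons ht, prodC_cons]

/-- Forward: each original edge is realized by its chain. -/
theorem chain_realizes (k : Fin A.edges.length) :
    PRun (nedges A) (Sum.inl (A.edges.get k).1) (A.edges.get k).2.1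
      (A.edges.get k).2.2.1 (Sum.inl (A.edges.get k).2.2.2) := by
  by_cases hj : (sylsOf A k).length = 0
  · have hm : (A.edges.get k).2.2.1 = 1 := by
      have := prodC_syl (A.edges.get k).2.2.1
      rw [show syl (A.edges.get k).2.2.1 = sylsOf A k from rfl,
        List.length_eq_zero_iff.1 hj] at this
      simpa using this.symm
    have he : (Sum.inl (A.edges.get k).1, (A.edges.get k).2.1, Sum.inl (1 : M₀),
        Sum.inl (A.edges.get k).2.2.2) ∈ nedgesS A := by
      exact (mem_nedgesS A).2 ⟨k, by simp [chainOf, hj]; exact List.mem_singleton_self _⟩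
    have := PRun.single (mem_nedges_of_memS A he)
    simp only at this
    rw [hm]
    convert this using 2
    simp [vS]
  · set s := sylsOf A k with hs
    set j := s.length with hjj
    have hmem : ∀ t < j, (node A k t, if t = 0 then (A.edges.get k).2.1 else [],
        s.getD t (Sum.inl 1), node A k (t + 1)) ∈ nedgesS A := by
      intro t ht
      rw [mem_nedgesS]
      refine ⟨k, ?_⟩
      rw [chainOf, if_neg hj]
      exact List.mem_map.2 ⟨t, List.mem_range.2 ht, rfl⟩
    have claim : ∀ d, d ≤ j → PRun (nedges A) (node A k (j - d))
        (if j - d = 0 then (A.edges.get k).2.1 else [])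
        (prodC (s.drop (j - d))) (Sum.inl (A.edges.get k).2.2.2) := by
      intro d
      induction d with
      | zero =>
        intro _
        simp only [Nat.sub_zero]
        rw [List.drop_length]
        have hnode : node A k j = Sum.inl (A.edges.get k).2.2.2 := by
          exact (if_neg hj).trans (if_pos (le_refl _))
        rw [hnode, if_neg hj]
        exact PRun.nil _
      | succ d ih =>
        intro hd
        have hjj' : j = s.length := hjj
        set t := j - (d + 1) with htdef
        have ht : t < j := by omega
        have hjd : j - d = t + 1 := by omega
        have hrest := ih (by omega)
        rw [hjd] at hrest
        have hrest' : PRun (nedges A) (node A k (t+1)) [] (prodC (s.drop (t+1)))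
            (Sum.inl (A.edges.get k).2.2.2) := by
          simpa using hrest
        have hstep := PRun.cons (mem_nedges_of_memS A (hmem t ht)) hrest'
        simp only at hstep
        rw [prodC_drop_eq s t (by omega)]
        simpa using hstep
    have h2 := claim j (le_refl _)
    rw [Nat.sub_self] at h2
    simp only [List.drop_zero, if_pos rfl] at h2
    rw [show node A k 0 = Sum.inl (A.edges.get k).1 from if_pos rfl] at h2
    rw [hs, show prodC (sylsOf A k) = (A.edges.get k).2.2.1 from prodC_syl _] at h2
    exact h2

/-- Forward simulation. -/
theorem forward_sim {p q : A.Q} {w m} (h : PRun A.edges p w m q) :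
    PRun (nedges A) (Sum.inl p) w m (Sum.inl q) := by
  induction h with
  | nil => exact PRun.nil _
  | step h he hq ih =>
    rename_i p' w' m' q' e
    rcases List.mem_iff_getElem.1 he with ⟨n, hn, hne⟩
    have := chain_realizes A ⟨n, hn⟩
    rw [show A.edges.get ⟨n, hn⟩ = e from by simp [hne]] at this
    rw [hq] at this
    exact ih.append this

theorem node_eq_inr (k : Fin A.edges.length) {t : ℕ} (h1 : 1 ≤ t)
    (h2 : t < (sylsOf A k).length) :
    node A k t = Sum.inr (k, (⟨t, by have := sylsOf_le A k; omega⟩ : Fin (NB A + 1))) := by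
  have hmin : min t (NB A) = t := by have := sylsOf_le A k; omega
  rw [show node A k t = vst A k t from (if_neg (by omega)).trans (if_neg (by omega)), vst]
  simp [Prod.ext_iff, Fin.ext_iff, hmin]; rfl

theorem node_zero (k : Fin A.edges.length) : node A k 0 = Sum.inl (A.edges.get k).1 :=
  if_pos rfl

theorem node_top (k : Fin A.edges.length) {t : ℕ} (h1 : 1 ≤ t)
    (h2 : (sylsOf A k).length ≤ t) :
    node A k t = Sum.inl (A.edges.get k).2.2.2 := by
  exact (if_neg (by omega)).trans (if_pos h2)

theorem backward_inv {p : A.Q} {p₀ : QN A} {w m q'} (hp0 : Sum.inl p = p₀)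
    (h : PRun (nedges A) p₀ w m q') :
    (∀ q, q' = Sum.inl q → PRun A.edges p w m q) ∧
    (∀ (k : Fin A.edges.length) (t' : Fin (NB A + 1)), q' = Sum.inr (k, t') →
      ∃ w₀ m₀, PRun A.edges p w₀ m₀ (A.edges.get k).1 ∧
        w = w₀ ++ (A.edges.get k).2.1 ∧ 1 ≤ (t' : ℕ) ∧ (t' : ℕ) < (sylsOf A k).length ∧
        m = m₀ * prodC ((sylsOf A k).take t')) := by
  induction h with
  | nil =>
    constructor
    · intro q hq
      rw [← hp0] at hq
      replace hq := Sum.inl.inj hq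
      rw [← hq]
      exact PRun.nil p
    · intro k t' hq
      rw [← hp0] at hq
      simp at hq
  | step h he hq ih =>
    rename_i w' m' q'' e
    rcases List.mem_map.1 he with ⟨e'', hin, heq⟩
    rcases (mem_nedgesS A).1 hin with ⟨k, hk⟩
    have hmk : prodC (sylsOf A k) = (A.edges.get k).2.2.1 := prodC_syl _
    have hek : A.edges.get k ∈ A.edges := List.get_mem _ _
    rw [chainOf] at hk
    by_cases hj : (sylsOf A k).length = 0
    · rw [if_pos hj] at hk
      rw [List.mem_singleton] at hk
      subst hk
      simp only [← heq] at hq ⊢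
      have hmk1 : (A.edges.get k).2.2.1 = 1 := by
        rw [← hmk, List.length_eq_zero_iff.1 hj]; rfl
      have hrun := ih.1 _ hq.symm
      constructor
      · intro q hhq
        replace hhq := Sum.inl.inj hhq
        have := hrun.step hek rfl
        rw [hmk1] at this
        rw [← hhq]
        simpa [vS] using this
      · intro k' t' hq'
        simp at hq'
    · rw [if_neg hj] at hk
      rcases List.mem_map.1 hk with ⟨t, htr, he''⟩
      rw [List.mem_range] at htr
      subst he''
      simp only [← heq] at hq ⊢
      by_cases ht0 : t = 0
      · subst ht0
        rw [node_zero] at hq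
        have hrun := ih.1 _ hq.symm
        simp only [if_pos rfl]
        by_cases htj : 1 < (sylsOf A k).length
        · -- t+1 < j : go to virtual state 1
          rw [node_eq_inr A k (by omega) (by omega)]
          constructor
          · intro q hhq; simp at hhq
          · intro k' t' hq'
            replace hq' := Prod.mk.inj (Sum.inr.inj hq')
            obtain ⟨rfl, ht'⟩ := hq'
            refine ⟨w', m', hrun, rfl, ?_, ?_, ?_⟩
            · rw [← ht']
            · rw [← ht']; simpa using htj
            · rw [← ht']
              simp only [Fin.val_mk]
              rw [show (1:ℕ) = 0 + 1 from rfl, prodC_take_succ _ _ (by omega)]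
              simp
        · -- t+1 = j : chain closes
          have hj1 : (sylsOf A k).length = 1 := by omega
          rw [node_top A k (by omega) (by omega)]
          constructor
          · intro q hhq
            replace hhq := Sum.inl.inj hhq
            have := hrun.step hek rfl
            rw [← hhq]
            have hval : (A.edges.get k).2.2.1 = vS ((sylsOf A k).getD 0 (Sum.inl 1)) := by
              rw [← hmk, show (sylsOf A k) = (sylsOf A k).take 1 from
                (List.take_of_length_le (by omega)).symm,
                show (1:ℕ) = 0 + 1 from rfl, prodC_take_succ _ _ (by omega)]
              simp
            rw [hval] at this
            exact this
          · intro k' t' hq'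
            simp at hq'
      · -- t ≥ 1
        rw [node_eq_inr A k (by omega) (by omega)] at hq
        rcases ih.2 _ _ hq.symm with ⟨w₀, m₀, hrun0, hww, _, _, hmm⟩
        simp only [Fin.val_mk] at hmm
        simp only [if_neg ht0]
        have hval : m' * vS ((sylsOf A k).getD t (Sum.inl 1))
            = m₀ * prodC ((sylsOf A k).take (t + 1)) := by
          rw [hmm, prodC_take_succ _ _ (by omega), mul_assoc]
        by_cases htj : t + 1 < (sylsOf A k).length
        · rw [node_eq_inr A k (by omega) htj]
          constructor
          · intro q hhq; simp at hhq
          · intro k' t' hq'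
            replace hq' := Prod.mk.inj (Sum.inr.inj hq')
            obtain ⟨rfl, ht'⟩ := hq'
            refine ⟨w₀, m₀, hrun0, by simpa using hww, ?_, ?_, ?_⟩
            · rw [← ht']; simp
            · rw [← ht']; simpa using htj
            · rw [← ht']
              simpa using hval
        · -- t+1 = j
          have hj1 : t + 1 = (sylsOf A k).length := by omega
          rw [node_top A k (by omega) (by omega)]
          constructor
          · intro q hhq
            replace hhq := Sum.inl.inj hhq
            have := hrun0.step hek rfl
            rw [← hhq]
            have : PRun A.edges p (w₀ ++ (A.edges.get k).2.1)
                (m₀ * (A.edges.get k).2.2.1) (A.edges.get k).2.2.2 := this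
            rw [show m' * vS ((sylsOf A k).getD t (Sum.inl 1))
                = m₀ * (A.edges.get k).2.2.1 from by
              rw [hval, hj1, List.take_length, hmk], hww]
            simpa using this
          · intro k' t' hq'
            simp at hq'

theorem backward_sim {p q : A.Q} {w m}
    (h : PRun (nedges A) (Sum.inl p) w m (Sum.inl q)) : PRun A.edges p w m q :=
  (backward_inv A rfl h).1 q rfl

/-! ### Letters, encoding, grammar -/

noncomputable def TB : ℕ := (A.edges.flatMap (fun e => e.2.1)).foldr max 0 + 1

theorem edge_letter_lt {e} (he : e ∈ A.edges) {a : ℕ} (ha : a ∈ e.2.1) : a < TB A :=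
  Nat.lt_succ_of_le (le_foldr_max (List.mem_flatMap.2 ⟨e, he, ha⟩))

theorem nedge_letter_lt {e} (he : e ∈ nedgesS A) {a : ℕ} (ha : a ∈ e.2.1) : a < TB A := by
  rcases (mem_nedgesS A).1 he with ⟨k, hk⟩
  have hek : A.edges.get k ∈ A.edges := List.get_mem _ _
  rw [chainOf] at hk
  by_cases hj : (sylsOf A k).length = 0
  · rw [if_pos hj, List.mem_singleton] at hk
    subst hk
    exact edge_letter_lt A hek ha
  · rw [if_neg hj] at hk
    rcases List.mem_map.1 hk with ⟨t, _, he''⟩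
    subst he''
    simp only at ha
    by_cases ht : t = 0
    · rw [if_pos ht] at ha
      exact edge_letter_lt A hek ha
    · rw [if_neg ht] at ha
      simp at ha

theorem nrun_letter_lt {p w m q} (h : PRun (nedges A) p w m q) : ∀ a ∈ w, a < TB A := by
  refine h.letters ?_
  intro e he a ha
  rcases List.mem_map.1 he with ⟨e', he', rfl⟩
  exact nedge_letter_lt A he' ha

theorem arun_letter_lt {p q : A.Q} {w m} (h : PRun A.edges p w m q) : ∀ a ∈ w, a < TB A :=
  h.letters (fun e he a ha => edge_letter_lt A he ha)

noncomputable def nu (x : QN A × QN A) : ℕ :=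
  TB A + 1 + (Fintype.equivFin (QN A × QN A) x : ℕ)

noncomputable def SS : ℕ := TB A

theorem nu_inj : Function.Injective (nu A) := by
  intro x y h
  have : (Fintype.equivFin (QN A × QN A) x : ℕ) = (Fintype.equivFin (QN A × QN A) y : ℕ) := by
    unfold nu at h; omega
  exact (Fintype.equivFin (QN A × QN A)).injective (Fin.ext this)

theorem nu_ne_SS (x) : nu A x ≠ SS A := by unfold nu SS; omega

theorem nu_not_lt_TB (x) : ¬ nu A x < TB A := by unfold nu; omega

theorem SS_not_lt_TB : ¬ SS A < TB A := by unfold SS; omega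

/-- `M₀`-side production automaton edges -/
noncomputable def B0edges : List (QN A × List ℕ × M₀ × QN A) :=
  ((nedgesS A).filterMap (fun e => match e.2.2.1 with
    | Sum.inl a => some (e.1, e.2.1, a, e.2.2.2)
    | Sum.inr _ => none))
  ++ ((Finset.univ : Finset (QN A × QN A)).toList.map fun x => (x.1, [nu A x], 1, x.2))

/-- `M₁`-side production automaton edges -/
noncomputable def B1edges : List (QN A × List ℕ × M₁ × QN A) :=
  ((nedgesS A).filterMap (fun e => match e.2.2.1 with
    | Sum.inl _ => none
    | Sum.inr b => some (e.1, e.2.1, b, e.2.2.2)))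
  ++ ((Finset.univ : Finset (QN A × QN A)).toList.map fun x => (x.1, [nu A x], 1, x.2))

theorem mem_B0edges {e} : e ∈ B0edges A ↔
    (∃ e' ∈ nedgesS A, ∃ a, e'.2.2.1 = Sum.inl a ∧ e = (e'.1, e'.2.1, a, e'.2.2.2)) ∨
    (∃ x, e = (x.1, [nu A x], 1, x.2)) := by
  rw [B0edges, List.mem_append, List.mem_filterMap]
  constructor
  · rintro (⟨e', he', hmatch⟩ | h)
    · left
      refine ⟨e', he', ?_⟩
      rcases hs : e'.2.2.1 with a | b
      · rw [hs] at hmatch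
        simp only [Option.some.injEq] at hmatch
        exact ⟨a, rfl, hmatch.symm⟩
      · rw [hs] at hmatch; simp at hmatch
    · right
      rcases List.mem_map.1 h with ⟨x, _, rfl⟩
      exact ⟨x, rfl⟩
  · rintro (⟨e', he', a, hs, rfl⟩ | ⟨x, rfl⟩)
    · left
      exact ⟨e', he', by rw [hs]⟩
    · right
      exact List.mem_map.2 ⟨x, by simp, rfl⟩

theorem mem_B1edges {e} : e ∈ B1edges A ↔
    (∃ e' ∈ nedgesS A, ∃ b, e'.2.2.1 = Sum.inr b ∧ e = (e'.1, e'.2.1, b, e'.2.2.2)) ∨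
    (∃ x, e = (x.1, [nu A x], 1, x.2)) := by
  rw [B1edges, List.mem_append, List.mem_filterMap]
  constructor
  · rintro (⟨e', he', hmatch⟩ | h)
    · left
      refine ⟨e', he', ?_⟩
      rcases hs : e'.2.2.1 with a | b
      · rw [hs] at hmatch; simp at hmatch
      · rw [hs] at hmatch
        simp only [Option.some.injEq] at hmatch
        exact ⟨b, rfl, hmatch.symm⟩
    · right
      rcases List.mem_map.1 h with ⟨x, _, rfl⟩
      exact ⟨x, rfl⟩
  · rintro (⟨e', he', b, hs, rfl⟩ | ⟨x, rfl⟩)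
    · left
      exact ⟨e', he', by rw [hs]⟩
    · right
      exact List.mem_map.2 ⟨x, by simp, rfl⟩

noncomputable def B0 (x : QN A × QN A) : VAut M₀ :=
  { Q := QN A, edges := B0edges A, init := x.1, final := fun r => r = x.2 }

noncomputable def B1 (x : QN A × QN A) : VAut M₁ :=
  { Q := QN A, edges := B1edges A, init := x.1, final := fun r => r = x.2 }

theorem mem_B0_lang {x : QN A × QN A} {w} :
    w ∈ (B0 A x).lang ↔ PRun (B0edges A) x.1 w 1 x.2 := by
  rw [vaut_mem_lang_iff]
  constructor
  · rintro ⟨q, rfl, h⟩; exact h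
  · intro h; exact ⟨x.2, rfl, h⟩

theorem mem_B1_lang {x : QN A × QN A} {w} :
    w ∈ (B1 A x).lang ↔ PRun (B1edges A) x.1 w 1 x.2 := by
  rw [vaut_mem_lang_iff]
  constructor
  · rintro ⟨q, rfl, h⟩; exact h
  · intro h; exact ⟨x.2, rfl, h⟩

open Classical in
/-- list of final states -/
noncomputable def finalsL : List A.Q :=
  (Finset.univ.filter fun q => A.final q).toList

theorem mem_finalsL {q : A.Q} : q ∈ finalsL A ↔ A.final q := by
  classical
  rw [finalsL]
  simp [Finset.mem_filter]

/-- start-production automaton -/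
noncomputable def SAut : VAut M₀ :=
  { Q := Bool,
    edges := (finalsL A).map fun q =>
      (false, [nu A (Sum.inl A.init, Sum.inl q)], (1 : M₀), true),
    init := false,
    final := fun b => b = true }

theorem SAut_run_inv {w m} {b : Bool} (h : PRun (SAut A).edges false w m b) :
    (b = false → w = []) ∧
    (b = true → ∃ q, A.final q ∧ w = [nu A (Sum.inl A.init, Sum.inl q)]) := by
  induction h with
  | nil => simp
  | step h he hq ih =>
    rcases List.mem_map.1 he with ⟨q, hqf, rfl⟩
    simp only at hq
    have hw : _ = [] := ih.1 hq.symm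
    constructor
    · intro h'; simp at h'
    · intro _
      exact ⟨q, (mem_finalsL A).1 hqf, by rw [hw]; simp⟩

theorem mem_SAut_lang {w} : w ∈ (SAut A).lang ↔
    ∃ q, A.final q ∧ w = [nu A (Sum.inl A.init, Sum.inl q)] := by
  rw [vaut_mem_lang_iff]
  constructor
  · rintro ⟨b, rfl, h⟩
    exact (SAut_run_inv A h).2 rfl
  · rintro ⟨q, hq, rfl⟩
    refine ⟨true, rfl, ?_⟩
    have he : (false, [nu A (Sum.inl A.init, Sum.inl q)], (1:M₀), true)
        ∈ (SAut A).edges := List.mem_map.2 ⟨q, (mem_finalsL A).2 hq, rfl⟩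
    have := PRun.single he
    exact this

/-- the grammar -/
noncomputable def GG : CGram :=
  { NT := insert (SS A) (Finset.image (nu A) Finset.univ),
    start := SS A,
    startMem := Finset.mem_insert_self _ _,
    prods := (SS A, (SAut A).lang) ::
      ((Finset.univ : Finset (QN A × QN A)).toList.flatMap fun x =>
        [(nu A x, (B0 A x).lang), (nu A x, (B1 A x).lang)]),
    lhsMem := by
      rintro p hp
      rcases List.mem_cons.1 hp with rfl | hp'
      · exact Finset.mem_insert_self _ _
      · rcases List.mem_flatMap.1 hp' with ⟨x, _, hx⟩
        have hx' : p = (nu A x, (B0 A x).lang) ∨ p = (nu A x, (B1 A x).lang) := by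
          simpa using hx
        have : p.1 = nu A x := by rcases hx' with rfl | rfl <;> rfl
        rw [this]
        exact Finset.mem_insert_of_mem (Finset.mem_image.2 ⟨x, Finset.mem_univ _, rfl⟩) }

theorem GG_prods_classes : ∀ p ∈ (GG A).prods, p.2 ∈ VA M₀ ∪ VA M₁ := by
  rintro p hp
  rcases List.mem_cons.1 hp with rfl | hp'
  · exact Or.inl ⟨SAut A, rfl⟩
  · rcases List.mem_flatMap.1 hp' with ⟨x, _, hx⟩
    have hx' : p = (nu A x, (B0 A x).lang) ∨ p = (nu A x, (B1 A x).lang) := by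
      simpa using hx
    rcases hx' with rfl | rfl
    · exact Or.inl ⟨B0 A x, rfl⟩
    · exact Or.inr ⟨B1 A x, rfl⟩

theorem S_prod_mem : (SS A, (SAut A).lang) ∈ (GG A).prods := List.mem_cons_self

theorem B0_prod_mem (x) : (nu A x, (B0 A x).lang) ∈ (GG A).prods := by
  refine List.mem_cons_of_mem _ (List.mem_flatMap.2 ⟨x, by simp, ?_⟩)
  simp

theorem B1_prod_mem (x) : (nu A x, (B1 A x).lang) ∈ (GG A).prods := by
  refine List.mem_cons_of_mem _ (List.mem_flatMap.2 ⟨x, by simp, ?_⟩)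
  simp

/-! ### Derivation helpers -/

theorem step_context {G : CGram} {u v} (h : G.step u v) (x z : List ℕ) :
    G.step (x ++ u ++ z) (x ++ v ++ z) := by
  rcases h with ⟨x', z', w, p, hp, hw, rfl, rfl⟩
  exact ⟨x ++ x', z' ++ z, w, p, hp, hw, by simp, by simp⟩

theorem rtg_context {G : CGram} {u v} (h : Relation.ReflTransGen G.step u v) (x z : List ℕ) :
    Relation.ReflTransGen G.step (x ++ u ++ z) (x ++ v ++ z) := by
  induction h with
  | refl => exact Relation.ReflTransGen.refl
  | tail h1 h2 ih => exact ih.tail (step_context h2 x z)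

theorem step_prod {G : CGram} {c L} (hm : (c, L) ∈ G.prods) {w} (hw : w ∈ L) (x z : List ℕ) :
    G.step (x ++ [c] ++ z) (x ++ w ++ z) := ⟨x, z, w, (c, L), hm, hw, rfl, rfl⟩

/-! ### Instantiation relation and soundness -/

inductive Inst : List ℕ → List ℕ → Prop
  | nil : Inst [] []
  | term {a α w} (h : a < TB A) (hi : Inst α w) : Inst (a :: α) (a :: w)
  | nuC {x : QN A × QN A} {α v w} (h : PRun (nedges A) x.1 v 1 x.2) (hi : Inst α w) :
      Inst (nu A x :: α) (v ++ w)
  | startC {α v w} (h : ∃ qf, A.final qf ∧ PRun (nedges A) (Sum.inl A.init) v 1 (Sum.inl qf))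
      (hi : Inst α w) : Inst (SS A :: α) (v ++ w)

theorem Inst_nil_inv {w} (h : Inst A [] w) : w = [] := by cases h; rfl

theorem Inst.append {α w₁ β w₂} (h1 : Inst A α w₁) (h2 : Inst A β w₂) :
    Inst A (α ++ β) (w₁ ++ w₂) := by
  induction h1 with
  | nil => exact h2
  | term h hi ih => exact Inst.term h ih
  | nuC h hi ih =>
    have := Inst.nuC (A := A) h ih
    simpa using this
  | startC h hi ih =>
    have := Inst.startC (A := A) h ih
    simpa using this

theorem Inst.split {α β w} (h : Inst A (α ++ β) w) :
    ∃ w₁ w₂, w = w₁ ++ w₂ ∧ Inst A α w₁ ∧ Inst A β w₂ := by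
  induction α generalizing w with
  | nil => exact ⟨[], w, rfl, Inst.nil, h⟩
  | cons a α ih =>
    cases h with
    | term h hi =>
      rcases ih hi with ⟨w₁, w₂, rfl, hw1, hw2⟩
      exact ⟨a :: w₁, w₂, rfl, Inst.term h hw1, hw2⟩
    | nuC h hi =>
      rcases ih hi with ⟨w₁, w₂, rfl, hw1, hw2⟩
      exact ⟨_ ++ w₁, w₂, by simp, Inst.nuC h hw1, hw2⟩
    | startC h hi =>
      rcases ih hi with ⟨w₁, w₂, rfl, hw1, hw2⟩
      exact ⟨_ ++ w₁, w₂, by simp, Inst.startC h hw1, hw2⟩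

theorem Inst.refl_term {w} (h : ∀ a ∈ w, a < TB A) : Inst A w w := by
  induction w with
  | nil => exact Inst.nil
  | cons a w ih =>
    exact Inst.term (h a (by simp)) (ih fun b hb => h b (by simp [hb]))

theorem Inst.term_eq {α w} (hα : ∀ a ∈ α, a < TB A) (h : Inst A α w) : w = α := by
  induction h with
  | nil => rfl
  | term h hi ih => rw [ih (fun b hb => hα b (by simp [hb]))]
  | nuC h hi ih => exact absurd (hα _ (List.mem_cons_self)) (nu_not_lt_TB A _)
  | startC h hi ih => exact absurd (hα _ (List.mem_cons_self)) (SS_not_lt_TB A)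

theorem Inst_cons_inv {c α w} (h : Inst A (c :: α) w) :
    (c < TB A ∧ ∃ w', w = c :: w' ∧ Inst A α w') ∨
    (∃ x v w', c = nu A x ∧ w = v ++ w' ∧ PRun (nedges A) x.1 v 1 x.2 ∧ Inst A α w') ∨
    (c = SS A ∧ ∃ v w', w = v ++ w' ∧
      (∃ qf, A.final qf ∧ PRun (nedges A) (Sum.inl A.init) v 1 (Sum.inl qf)) ∧
      Inst A α w') := by
  cases h with
  | term h hi => exact Or.inl ⟨h, _, rfl, hi⟩
  | nuC h hi => exact Or.inr (Or.inl ⟨_, _, _, rfl, rfl, h, hi⟩)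
  | startC h hi => exact Or.inr (Or.inr ⟨rfl, _, _, rfl, h, hi⟩)

theorem B0_sound {p w a q} (h : PRun (B0edges A) p w a q) :
    ∀ v, Inst A w v → PRun (nedges A) p v (Monoid.Coprod.inl a) q := by
  induction h with
  | nil =>
    intro v hv
    rw [Inst_nil_inv A hv, map_one]
    exact PRun.nil _
  | step h he hq ih =>
    rename_i p' w' m' q' e
    intro v hv
    rcases Inst.split A hv with ⟨v₁, v₂, rfl, h1, h2⟩
    have r1 := ih v₁ h1
    rw [← hq] at r1
    rcases (mem_B0edges A).1 he with ⟨e', he', a', hs, rfl⟩ | ⟨x, rfl⟩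
    · simp only at h2 ⊢
      have hterm : ∀ b ∈ e'.2.1, b < TB A := fun b hb => nedge_letter_lt A he' hb
      have hv2 : v₂ = e'.2.1 := Inst.term_eq A hterm h2
      subst hv2
      have hne := mem_nedges_of_memS A he'
      have r2 := PRun.single hne
      simp only at r2
      rw [hs] at r2
      have := r1.append r2
      rw [map_mul]
      exact this
    · simp only at h2 ⊢
      rcases Inst_cons_inv A h2 with ⟨hlt, _⟩ | ⟨x', v', w', hcx, hw, hrun, hi⟩ | ⟨hcs, _⟩
      · exact absurd hlt (nu_not_lt_TB A x)
      · have hx : x' = x := nu_inj A hcx.symm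
        subst hx
        rw [Inst_nil_inv A hi, List.append_nil] at hw
        subst hw
        have := r1.append hrun
        rw [map_mul, map_one]
        simpa using this
      · exact absurd hcs (nu_ne_SS A x)

theorem B1_sound {p w a q} (h : PRun (B1edges A) p w a q) :
    ∀ v, Inst A w v → PRun (nedges A) p v (Monoid.Coprod.inr a) q := by
  induction h with
  | nil =>
    intro v hv
    rw [Inst_nil_inv A hv, map_one]
    exact PRun.nil _
  | step h he hq ih =>
    rename_i p' w' m' q' e
    intro v hv
    rcases Inst.split A hv with ⟨v₁, v₂, rfl, h1, h2⟩
    have r1 := ih v₁ h1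
    rw [← hq] at r1
    rcases (mem_B1edges A).1 he with ⟨e', he', b', hs, rfl⟩ | ⟨x, rfl⟩
    · simp only at h2 ⊢
      have hterm : ∀ b ∈ e'.2.1, b < TB A := fun b hb => nedge_letter_lt A he' hb
      have hv2 : v₂ = e'.2.1 := Inst.term_eq A hterm h2
      subst hv2
      have hne := mem_nedges_of_memS A he'
      have r2 := PRun.single hne
      simp only at r2
      rw [hs] at r2
      have := r1.append r2
      rw [map_mul]
      exact this
    · simp only at h2 ⊢
      rcases Inst_cons_inv A h2 with ⟨hlt, _⟩ | ⟨x', v', w', hcx, hw, hrun, hi⟩ | ⟨hcs, _⟩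
      · exact absurd hlt (nu_not_lt_TB A x)
      · have hx : x' = x := nu_inj A hcx.symm
        subst hx
        rw [Inst_nil_inv A hi, List.append_nil] at hw
        subst hw
        have := r1.append hrun
        rw [map_mul, map_one]
        simpa using this
      · exact absurd hcs (nu_ne_SS A x)

theorem prod_cases {pr} (hpr : pr ∈ (GG A).prods) :
    pr = (SS A, (SAut A).lang) ∨
    ∃ x, pr = (nu A x, (B0 A x).lang) ∨ pr = (nu A x, (B1 A x).lang) := by
  rcases List.mem_cons.1 hpr with rfl | hp'
  · exact Or.inl rfl
  · rcases List.mem_flatMap.1 hp' with ⟨x, _, hx⟩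
    refine Or.inr ⟨x, ?_⟩
    simpa using hx

theorem step_sound {α β} (h : (GG A).step α β) {w} (hw : Inst A β w) : Inst A α w := by
  rcases h with ⟨x, z, γ, pr, hpr, hγ, rfl, rfl⟩
  rcases Inst.split A hw with ⟨w12, w₃, rfl, hw12, hw3⟩
  rcases Inst.split A hw12 with ⟨w₁, w₂, rfl, hw1, hw2⟩
  have hmid : Inst A ([pr.1] ++ z) (w₂ ++ w₃) := by
    rcases prod_cases A hpr with rfl | ⟨x', rfl | rfl⟩
    · simp only
      rcases mem_SAut_lang A |>.1 hγ with ⟨q, hq, rfl⟩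
      rcases Inst_cons_inv A hw2 with ⟨hlt, _⟩ | ⟨x', v', w', hcx, hw, hrun, hi⟩ | ⟨hcs, _⟩
      · exact absurd hlt (nu_not_lt_TB A _)
      · have hx : x' = (Sum.inl A.init, Sum.inl q) := nu_inj A hcx.symm
        subst hx
        rw [Inst_nil_inv A hi, List.append_nil] at hw
        subst hw
        exact Inst.startC ⟨q, hq, hrun⟩ hw3
      · exact absurd hcs (nu_ne_SS A _)
    · simp only
      have hrun := (mem_B0_lang A).1 hγ
      have := B0_sound A hrun w₂ hw2
      rw [map_one] at this
      exact Inst.nuC this hw3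
    · simp only
      have hrun := (mem_B1_lang A).1 hγ
      have := B1_sound A hrun w₂ hw2
      rw [map_one] at this
      exact Inst.nuC this hw3
  have := Inst.append A hw1 hmid
  simpa [List.append_assoc] using this

def OkLetter (a : ℕ) : Prop := a < TB A ∨ a = SS A ∨ ∃ x, a = nu A x

theorem prod_letters {pr} (hpr : pr ∈ (GG A).prods) {γ} (hγ : γ ∈ pr.2) :
    ∀ a ∈ γ, OkLetter A a := by
  rcases prod_cases A hpr with rfl | ⟨x', rfl | rfl⟩
  · rcases (mem_SAut_lang A).1 hγ with ⟨q, _, rfl⟩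
    intro a ha
    rw [List.mem_singleton] at ha
    exact Or.inr (Or.inr ⟨_, ha⟩)
  · have hrun := (mem_B0_lang A).1 hγ
    refine hrun.letters ?_
    intro e he a ha
    rcases (mem_B0edges A).1 he with ⟨e', he', a', hs, rfl⟩ | ⟨x, rfl⟩
    · exact Or.inl (nedge_letter_lt A he' ha)
    · simp only [List.mem_singleton] at ha
      exact Or.inr (Or.inr ⟨_, ha⟩)
  · have hrun := (mem_B1_lang A).1 hγ
    refine hrun.letters ?_
    intro e he a ha
    rcases (mem_B1edges A).1 he with ⟨e', he', b', hs, rfl⟩ | ⟨x, rfl⟩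
    · exact Or.inl (nedge_letter_lt A he' ha)
    · simp only [List.mem_singleton] at ha
      exact Or.inr (Or.inr ⟨_, ha⟩)

theorem derivable_letters {α} (h : Relation.ReflTransGen (GG A).step [SS A] α) :
    ∀ a ∈ α, OkLetter A a := by
  induction h with
  | refl =>
    intro a ha
    rw [List.mem_singleton] at ha
    exact Or.inr (Or.inl ha)
  | tail h1 h2 ih =>
    rcases h2 with ⟨x, z, γ, pr, hpr, hγ, rfl, rfl⟩
    intro a ha
    simp only [List.mem_append] at ha
    rcases ha with (hx | hγ') | hz
    · exact ih a (by simp [hx])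
    · exact prod_letters A hpr hγ a hγ'
    · exact ih a (by simp [hz])

theorem G_sound : (GG A).lang ⊆ A.lang := by
  intro w hw
  rcases hw with ⟨hd, hterm⟩
  have hok := derivable_letters A hd
  have hlt : ∀ a ∈ w, a < TB A := by
    intro a ha
    rcases hok a ha with h | h | ⟨x, rfl⟩
    · exact h
    · subst h
      exact absurd (Finset.mem_insert_self _ _) (hterm _ ha)
    · exact absurd (Finset.mem_insert_of_mem
        (Finset.mem_image.2 ⟨x, Finset.mem_univ _, rfl⟩)) (hterm _ ha)
  have hseed : Inst A w w := Inst.refl_term A hlt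
  have claim : ∀ α, Relation.ReflTransGen (GG A).step α w → Inst A α w := by
    intro α hα
    induction hα using Relation.ReflTransGen.head_induction_on with
    | refl => exact hseed
    | head h1 h2 ih => exact step_sound A h1 ih
  have hS : Inst A [SS A] w := claim _ hd
  rcases Inst_cons_inv A hS with ⟨hltS, _⟩ | ⟨x', v', w', hcx, _⟩ | ⟨_, v, w', hw', ⟨qf, hqf, hrun⟩, hi⟩
  · exact absurd hltS (SS_not_lt_TB A)
  · exact absurd hcx.symm (nu_ne_SS A x')
  · rw [Inst_nil_inv A hi, List.append_nil] at hw'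
    subst hw'
    rw [vaut_mem_lang_iff]
    exact ⟨qf, hqf, backward_sim A (hrun)⟩

/-! ### Jump paths and completeness -/

abbrev JI := (QN A × List ℕ × (M₀ ⊕ M₁) × QN A) ⊕ (QN A × QN A)

def srcJ : JI A → QN A := Sum.elim (·.1) (·.1)
def dstJ : JI A → QN A := Sum.elim (·.2.2.2) (·.2)
noncomputable def wJ : JI A → List ℕ := Sum.elim (·.2.1) (fun x => [nu A x])
def vJ : JI A → Monoid.Coprod M₀ M₁ := Sum.elim (fun e => vS e.2.2.1) (fun _ => 1)
def tagJ : JI A → Option Bool := Sum.elim (fun e => some (Sum.isRight e.2.2.1)) (fun _ => none)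
def OKJ : JI A → Prop := Sum.elim (· ∈ nedgesS A) (fun _ => True)

noncomputable def wordJ (l : List (JI A)) : List ℕ := (l.map (wJ A)).flatten
noncomputable def valJ (l : List (JI A)) : Monoid.Coprod M₀ M₁ := (l.map (vJ A)).prod
noncomputable def cntJ (l : List (JI A)) : ℕ := l.countP (fun it => (tagJ A it).isSome)

@[simp] theorem wordJ_nil : wordJ A [] = [] := rfl
@[simp] theorem valJ_nil : valJ A [] = 1 := rfl
@[simp] theorem wordJ_cons (it l) : wordJ A (it :: l) = wJ A it ++ wordJ A l := by
  simp [wordJ]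
@[simp] theorem valJ_cons (it l) : valJ A (it :: l) = vJ A it * valJ A l := by
  simp [valJ]
@[simp] theorem wordJ_append (x y) : wordJ A (x ++ y) = wordJ A x ++ wordJ A y := by
  simp [wordJ]
@[simp] theorem valJ_append (x y) : valJ A (x ++ y) = valJ A x * valJ A y := by
  simp [valJ]
theorem cntJ_append (x y) : cntJ A (x ++ y) = cntJ A x + cntJ A y :=
  List.countP_append

inductive JPath : QN A → List (JI A) → QN A → Prop
  | nil (p) : JPath p [] p
  | cons {p it l q} (hp : srcJ A it = p) (hok : OKJ A it)
      (h : JPath (dstJ A it) l q) : JPath p (it :: l) q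

theorem JPath.split {x y : List (JI A)} {p q} (h : JPath A p (x ++ y) q) :
    ∃ r, JPath A p x r ∧ JPath A r y q := by
  induction x generalizing p with
  | nil => exact ⟨p, JPath.nil p, h⟩
  | cons it x ih =>
    cases h with
    | cons hp hok h =>
      rcases ih h with ⟨r, h1, h2⟩
      exact ⟨r, JPath.cons hp hok h1, h2⟩

theorem JPath.comp {x y : List (JI A)} {p r q} (h1 : JPath A p x r) (h2 : JPath A r y q) :
    JPath A p (x ++ y) q := by
  induction h1 with
  | nil => exact h2
  | cons hp hok h ih => exact JPath.cons hp hok (ih h2)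

theorem from_nrun {p w m q} (h : PRun (nedges A) p w m q) :
    ∃ l, JPath A p l q ∧ wordJ A l = w ∧ valJ A l = m ∧
      ∀ it ∈ l, (tagJ A it).isSome := by
  induction h with
  | nil => exact ⟨[], JPath.nil _, rfl, rfl, by simp⟩
  | step h he hq ih =>
    rcases ih with ⟨l, hp, hw, hv, ht⟩
    rcases List.mem_map.1 he with ⟨e', he', rfl⟩
    refine ⟨l ++ [(Sum.inl e' : JI A)], ?_, ?_, ?_, ?_⟩
    · refine hp.comp A (JPath.cons (it := (Sum.inl e' : JI A)) ?_ ?_ (JPath.nil _))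
      · simpa [srcJ] using hq
      · simpa [OKJ] using he'
    · simp [hw, wJ]
    · simp [hv, vJ]
    · intro it hit
      rcases List.mem_append.1 hit with h' | h'
      · exact ht it h'
      · rw [List.mem_singleton] at h'
        subst h'
        simp [tagJ]

def PureJ (i : Bool) (l : List (JI A)) : Prop :=
  ∀ it ∈ l, tagJ A it = none ∨ tagJ A it = some i

theorem pure0_run {p q} {l : List (JI A)} (h : JPath A p l q) (hp : PureJ A false l) :
    ∃ a, PRun (B0edges A) p (wordJ A l) a q ∧ Monoid.Coprod.inl a = valJ A l := by
  induction h with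
  | nil => exact ⟨1, PRun.nil _, by simp⟩
  | cons hsrc hok h ih =>
    rename_i p' it l' q'
    rcases ih (fun b hb => hp b (by simp [hb])) with ⟨a, hr, hv⟩
    cases it with
    | inl e' =>
      have htag := hp (Sum.inl e') (by simp)
      simp only [tagJ, Sum.elim_inl] at htag
      rcases htag with h' | h'
      · simp at h'
      · rcases hs : e'.2.2.1 with a' | b'
        · have hmem : (e'.1, e'.2.1, a', e'.2.2.2) ∈ B0edges A :=
            (mem_B0edges A).2 (Or.inl ⟨e', hok, a', hs, rfl⟩)
          have := PRun.cons hmem (by simpa [dstJ] using hr)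
          simp only at this
          refine ⟨a' * a, ?_, ?_⟩
          · rw [← hsrc]
            simpa [srcJ, wJ] using this
          · rw [map_mul, hv]
            simp [vJ, hs, vS]
        · rw [Option.some_inj] at h'
          rw [hs] at h'
          simp at h'
    | inr x =>
      have hmem : (x.1, [nu A x], (1:M₀), x.2) ∈ B0edges A :=
        (mem_B0edges A).2 (Or.inr ⟨x, rfl⟩)
      have := PRun.cons hmem (by simpa [dstJ] using hr)
      simp only at this
      refine ⟨1 * a, ?_, ?_⟩
      · rw [← hsrc]
        simpa [srcJ, wJ] using this
      · rw [map_mul, hv]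
        simp [vJ]

theorem pure1_run {p q} {l : List (JI A)} (h : JPath A p l q) (hp : PureJ A true l) :
    ∃ a, PRun (B1edges A) p (wordJ A l) a q ∧ Monoid.Coprod.inr a = valJ A l := by
  induction h with
  | nil => exact ⟨1, PRun.nil _, by simp⟩
  | cons hsrc hok h ih =>
    rename_i p' it l' q'
    rcases ih (fun b hb => hp b (by simp [hb])) with ⟨a, hr, hv⟩
    cases it with
    | inl e' =>
      have htag := hp (Sum.inl e') (by simp)
      simp only [tagJ, Sum.elim_inl] at htag
      rcases htag with h' | h'
      · simp at h'
      · rcases hs : e'.2.2.1 with a' | b'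
        · rw [Option.some_inj] at h'
          rw [hs] at h'
          simp at h'
        · have hmem : (e'.1, e'.2.1, b', e'.2.2.2) ∈ B1edges A :=
            (mem_B1edges A).2 (Or.inl ⟨e', hok, b', hs, rfl⟩)
          have := PRun.cons hmem (by simpa [dstJ] using hr)
          simp only at this
          refine ⟨b' * a, ?_, ?_⟩
          · rw [← hsrc]
            simpa [srcJ, wJ] using this
          · rw [map_mul, hv]
            simp [vJ, hs, vS]
    | inr x =>
      have hmem : (x.1, [nu A x], (1:M₁), x.2) ∈ B1edges A :=
        (mem_B1edges A).2 (Or.inr ⟨x, rfl⟩)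
      have := PRun.cons hmem (by simpa [dstJ] using hr)
      simp only at this
      refine ⟨1 * a, ?_, ?_⟩
      · rw [← hsrc]
        simpa [srcJ, wJ] using this
      · rw [map_mul, hv]
        simp [vJ]

theorem pure_deriv {r r'} {i} {l : List (JI A)} (h : JPath A r l r') (hp : PureJ A i l)
    (hv : valJ A l = 1) : (GG A).step [nu A (r, r')] (wordJ A l) := by
  have hmem : wordJ A l ∈ if i then (B1 A (r, r')).lang else (B0 A (r, r')).lang := by
    cases i with
    | false =>
      rcases pure0_run A h hp with ⟨a, hr, hva⟩
      rw [hv] at hva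
      have ha : a = 1 := Monoid.Coprod.inl_injective (by rw [hva, map_one])
      subst ha
      simpa using (mem_B0_lang A).2 hr
    | true =>
      rcases pure1_run A h hp with ⟨a, hr, hva⟩
      rw [hv] at hva
      have ha : a = 1 := Monoid.Coprod.inr_injective (by rw [hva, map_one])
      subst ha
      simpa using (mem_B1_lang A).2 hr
  cases i with
  | false =>
    have := step_prod (B0_prod_mem A (r, r')) (by simpa using hmem) [] []
    simpa using this
  | true =>
    have := step_prod (B1_prod_mem A (r, r')) (by simpa using hmem) [] []
    simpa using this

theorem dropWhile_head_prop {α : Type*} (p : α → Bool) :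
    ∀ l : List α, l.dropWhile p ≠ [] → ∃ b t, l.dropWhile p = b :: t ∧ p b = false := by
  intro l
  induction l with
  | nil => intro h; simp at h
  | cons a l ih =>
    intro h
    by_cases hpa : p a
    · rw [List.dropWhile_cons_of_pos hpa] at h ⊢
      exact ih h
    · rw [List.dropWhile_cons_of_neg hpa]
      exact ⟨a, l, rfl, Bool.eq_false_iff.2 hpa⟩

noncomputable def firstSome (l : List (JI A)) : Option Bool :=
  (l.filterMap (tagJ A)).head?

theorem pure_of_firstSome_none {l} (h : firstSome A l = none) : PureJ A false l := by
  intro b hb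
  left
  have h' : l.filterMap (tagJ A) = [] := List.head?_eq_none_iff.1 h
  exact List.filterMap_eq_nil_iff.1 h' b hb

theorem firstSome_cons_tag {it l j} (h : tagJ A it = some j) :
    firstSome A (it :: l) = some j := by
  simp [firstSome, List.filterMap_cons, h]

theorem valJ_flatten (L : List (List (JI A))) :
    valJ A L.flatten = (L.map (valJ A)).prod := by
  induction L with
  | nil => simp
  | cons a L ih => simp [ih]

theorem BD : ∀ n (l : List (JI A)) i, l.length ≤ n → firstSome A l = some i →
    ∃ segs : List (Bool × List (JI A)),
      l = (segs.map Prod.snd).flatten ∧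
      (∀ s ∈ segs, PureJ A s.1 s.2 ∧ ∃ b ∈ s.2, tagJ A b = some s.1) ∧
      (segs.map Prod.fst).Chain' (· ≠ ·) ∧
      segs.head?.map Prod.fst = some i := by
  intro n
  induction n with
  | zero =>
    intro l i hl hf
    have hl0 : l = [] := List.length_eq_zero_iff.1 (Nat.le_zero.1 hl)
    subst hl0
    simp [firstSome] at hf
  | succ n ih =>
    intro l i hl hf
    set P : JI A → Bool := fun it => decide (tagJ A it ≠ some (!i)) with hP
    set x := l.takeWhile P with hxdef
    set y := l.dropWhile P with hydef
    have hxy : x ++ y = l := List.takeWhile_append_dropWhile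
    have hx_pure : PureJ A i x := by
      intro b hb
      have hPb := List.mem_takeWhile_imp hb
      rw [hP] at hPb
      simp only [decide_eq_true_eq] at hPb
      rcases htb : tagJ A b with _ | j
      · exact Or.inl rfl
      · right
        rw [htb] at hPb
        have hji : j ≠ !i := fun h => hPb (by rw [h])
        have : j = i := by revert hji; cases j <;> cases i <;> decide
        rw [this]
    have hxi : ∃ b ∈ x, tagJ A b = some i := by
      by_cases hxe : x.filterMap (tagJ A) = []
      · exfalso
        have hfy : firstSome A y = some i := by
          rw [firstSome] at hf ⊢
          rw [← hxy, List.filterMap_append, hxe] at hf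
          simpa using hf
        have hyne : y ≠ [] := by
          intro h0
          rw [h0] at hfy
          simp [firstSome] at hfy
        rcases dropWhile_head_prop P l (by rw [← hydef]; exact hyne) with ⟨b₀, t, hdw, hPb⟩
        rw [hP] at hPb
        simp only [decide_eq_false_iff_not, Decidable.not_not] at hPb
        have hfy' : firstSome A y = some (!i) := by
          rw [hydef, hdw]
          exact firstSome_cons_tag A hPb
        rw [hfy] at hfy'
        simp only [Option.some.injEq] at hfy'
        revert hfy'
        cases i <;> decide
      · have hsome : ∃ b ∈ x, (tagJ A b).isSome := by
          by_contra hc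
          push_neg at hc
          apply hxe
          rw [List.filterMap_eq_nil_iff]
          intro a ha
          exact Option.not_isSome_iff_eq_none.1 (by simpa using hc a ha)
        rcases hsome with ⟨b, hb, hbs⟩
        rcases Option.isSome_iff_exists.1 hbs with ⟨j, hj⟩
        rcases hx_pure b hb with h0 | h0
        · rw [h0] at hj; simp at hj
        · exact ⟨b, hb, h0⟩
    by_cases hy : y = []
    · refine ⟨[(i, l)], by simp, ?_, by show List.IsChain _ _; simp, by simp⟩
      intro s hs
      rw [List.mem_singleton] at hs
      subst hs
      have hlx : l = x := by rw [← hxy, hy, List.append_nil]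
      exact ⟨by rw [hlx]; exact hx_pure, by rw [hlx]; exact hxi⟩
    · rcases dropWhile_head_prop P l (by rw [← hydef]; exact hy) with ⟨b₀, t, hdw, hPb⟩
      rw [hP] at hPb
      simp only [decide_eq_false_iff_not, Decidable.not_not] at hPb
      have hx_ne : x ≠ [] := by
        rcases hxi with ⟨b, hb, _⟩
        intro h0
        rw [h0] at hb
        simp at hb
      have hylen : y.length ≤ n := by
        have h1 := congrArg List.length hxy
        rw [List.length_append] at h1
        have h2 : 1 ≤ x.length := List.length_pos_iff.2 hx_ne
        omega
      have hfy : firstSome A y = some (!i) := by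
        rw [hydef, hdw]
        exact firstSome_cons_tag A hPb
      rcases ih y (!i) hylen hfy with ⟨segs, hflat, hsegs, hchain, hhd⟩
      refine ⟨(i, x) :: segs, ?_, ?_, ?_, by simp⟩
      · simp only [List.map_cons, List.flatten_cons]
        rw [← hflat, hxy]
      · intro s hs
        rcases List.mem_cons.1 hs with rfl | hs'
        · exact ⟨hx_pure, hxi⟩
        · exact hsegs s hs'
      · rw [List.map_cons]
        show List.IsChain _ _
        rw [List.isChain_cons]
        refine ⟨?_, hchain⟩
        intro j hj
        have hh : (segs.map Prod.fst).head? = some (!i) := by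
          rw [List.head?_map]
          exact hhd
        rw [hh] at hj
        rw [Option.mem_def, Option.some.injEq] at hj
        subst hj
        cases i <;> simp

theorem pure0_val {l : List (JI A)} (h : PureJ A false l) :
    ∃ a, valJ A l = Monoid.Coprod.inl a := by
  induction l with
  | nil => exact ⟨1, by simp⟩
  | cons it l ih =>
    rcases ih (fun b hb => h b (by simp [hb])) with ⟨a, ha⟩
    cases it with
    | inl e' =>
      have htag := h (Sum.inl e') (by simp)
      simp only [tagJ, Sum.elim_inl, Option.some.injEq] at htag
      rcases htag with h' | h'
      · simp at h'
      · rcases hs : e'.2.2.1 with a' | b'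
        · exact ⟨a' * a, by simp [vJ, hs, vS, ha, map_mul]⟩
        · rw [hs] at h'; simp at h'
    | inr x => exact ⟨a, by simp [vJ, ha]⟩

theorem pure1_val {l : List (JI A)} (h : PureJ A true l) :
    ∃ a, valJ A l = Monoid.Coprod.inr a := by
  induction l with
  | nil => exact ⟨1, by simp⟩
  | cons it l ih =>
    rcases ih (fun b hb => h b (by simp [hb])) with ⟨a, ha⟩
    cases it with
    | inl e' =>
      have htag := h (Sum.inl e') (by simp)
      simp only [tagJ, Sum.elim_inl, Option.some.injEq] at htag
      rcases htag with h' | h'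
      · simp at h'
      · rcases hs : e'.2.2.1 with a' | b'
        · rw [hs] at h'; simp at h'
        · exact ⟨b' * a, by simp [vJ, hs, vS, ha, map_mul]⟩
    | inr x => exact ⟨a, by simp [vJ, ha]⟩

theorem seg_lemma {l : List (JI A)} (hval : valJ A l = 1) (hnp : ¬ ∃ i, PureJ A i l) :
    ∃ x B y i, l = x ++ B ++ y ∧ PureJ A i B ∧ (∃ b ∈ B, tagJ A b = some i) ∧
      valJ A B = 1 := by
  rcases hfs : firstSome A l with _ | i₀
  · exact absurd ⟨false, pure_of_firstSome_none A hfs⟩ hnp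
  rcases BD A l.length l i₀ le_rfl hfs with ⟨segs, hflat, hsegs, hchain, hhd⟩
  have hne : segs ≠ [] := by
    intro h0
    rw [h0] at hhd
    simp at hhd
  have key := alt_exists_one (segs.map (fun s => (s.1, valJ A s.2)))
    (by simpa using hne)
    (by
      intro s hs
      rcases List.mem_map.1 hs with ⟨s₀, hs₀, rfl⟩
      constructor
      · intro h1
        simp only at h1
        rcases pure0_val A (h1 ▸ (hsegs s₀ hs₀).1) with ⟨a, ha⟩
        exact ⟨a, ha⟩
      · intro h1
        simp only at h1
        rcases pure1_val A (h1 ▸ (hsegs s₀ hs₀).1) with ⟨b, hb⟩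
        exact ⟨b, hb⟩)
    (by
      rw [List.map_map]
      have : (Prod.fst ∘ fun s : Bool × List (JI A) => (s.1, valJ A s.2)) = Prod.fst := rfl
      rw [this]
      exact hchain)
    (by
      rw [List.map_map]
      have : (Prod.snd ∘ fun s : Bool × List (JI A) => (s.1, valJ A s.2))
          = valJ A ∘ Prod.snd := rfl
      rw [this, ← List.map_map, ← valJ_flatten, ← hflat]
      exact hval)
  rcases key with ⟨s, hsmem, hs1⟩
  rcases List.mem_map.1 hsmem with ⟨s₀, hs₀mem, rfl⟩
  simp only at hs1
  rcases List.append_of_mem hs₀mem with ⟨sa, sb, rfl⟩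
  refine ⟨(sa.map Prod.snd).flatten, s₀.2, ((sb.map Prod.snd).flatten), s₀.1, ?_,
    (hsegs s₀ (by simp)).1, (hsegs s₀ (by simp)).2, hs1⟩
  rw [hflat]
  simp [List.append_assoc]

theorem main_comp : ∀ n (l : List (JI A)) (p q), cntJ A l ≤ n → JPath A p l q →
    valJ A l = 1 →
    Relation.ReflTransGen (GG A).step [nu A (p, q)] (wordJ A l) := by
  intro n
  induction n with
  | zero =>
    intro l p q hc hp hv
    have hpure : PureJ A false l := by
      intro it hit
      left
      have h0 : cntJ A l = 0 := Nat.le_zero.1 hc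
      have := List.countP_eq_zero.1 h0 it hit
      exact Option.not_isSome_iff_eq_none.1 (by simpa using this)
    exact Relation.ReflTransGen.single (pure_deriv A hp hpure hv)
  | succ n ih =>
    intro l p q hc hp hv
    by_cases hpure : ∃ i, PureJ A i l
    · rcases hpure with ⟨i, hi⟩
      exact Relation.ReflTransGen.single (pure_deriv A hp hi hv)
    · rcases seg_lemma A hv hpure with ⟨x, B, y, i, rfl, hpB, hBt, hvB⟩
      rw [List.append_assoc] at hp
      rcases JPath.split A hp with ⟨r, hx, hBy⟩
      rcases JPath.split A hBy with ⟨r', hB, hy⟩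
      have hnew : JPath A p (x ++ (Sum.inr (r, r') : JI A) :: y) q :=
        hx.comp A (JPath.cons (it := (Sum.inr (r, r') : JI A)) rfl trivial hy)
      have hvnew : valJ A (x ++ (Sum.inr (r, r') : JI A) :: y) = 1 := by
        have h1 : valJ A (x ++ B ++ y) = 1 := hv
        rw [valJ_append, valJ_append, hvB, mul_one] at h1
        simp only [valJ_append, valJ_cons, vJ, Sum.elim_inr, one_mul]
        exact h1
      have hcnew : cntJ A (x ++ (Sum.inr (r, r') : JI A) :: y) ≤ n := by
        have h1 : cntJ A (x ++ B ++ y) = cntJ A x + cntJ A B + cntJ A y := by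
          rw [cntJ_append, cntJ_append]
        have h2 : 1 ≤ cntJ A B := by
          rcases hBt with ⟨b, hb, htag⟩
          exact List.countP_pos_iff.2 ⟨b, hb, by simp [htag]⟩
        have h3 : cntJ A (x ++ (Sum.inr (r, r') : JI A) :: y)
            = cntJ A x + cntJ A y := by
          rw [show ((Sum.inr (r, r') : JI A) :: y) = [(Sum.inr (r, r') : JI A)] ++ y
            from rfl, cntJ_append, cntJ_append]
          have : cntJ A [(Sum.inr (r, r') : JI A)] = 0 := by
            simp [cntJ, tagJ]
          omega
        omega
      have hder := ih _ p q hcnew hnew hvnew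
      have hstep : (GG A).step (wordJ A (x ++ (Sum.inr (r, r') : JI A) :: y))
          (wordJ A (x ++ B ++ y)) := by
        have hw1 : wordJ A (x ++ (Sum.inr (r, r') : JI A) :: y)
            = wordJ A x ++ [nu A (r, r')] ++ wordJ A y := by
          simp [wJ, List.append_assoc]
        have hw2 : wordJ A (x ++ B ++ y) = wordJ A x ++ wordJ A B ++ wordJ A y := by
          simp [List.append_assoc]
        rw [hw1, hw2]
        exact step_context (pure_deriv A hB hpB hvB) _ _
      exact hder.tail hstep

theorem G_complete : A.lang ⊆ (GG A).lang := by
  intro w hw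
  rcases vaut_mem_lang_iff.1 hw with ⟨qf, hqf, hrun⟩
  have hlt := arun_letter_lt A hrun
  have hn := forward_sim A hrun
  rcases from_nrun A hn with ⟨l, hp, hwl, hvl, _⟩
  have hder := main_comp A (cntJ A l) l _ _ le_rfl hp (by rw [hvl])
  rw [hwl] at hder
  constructor
  · have hfirst : (GG A).step [SS A] [nu A (Sum.inl A.init, Sum.inl qf)] := by
      have := step_prod (S_prod_mem A) ((mem_SAut_lang A).2 ⟨qf, hqf, rfl⟩) [] []
      simpa using this
    exact Relation.ReflTransGen.head hfirst hder
  · intro a ha hmem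
    rcases Finset.mem_insert.1 hmem with rfl | hmem'
    · exact SS_not_lt_TB A (hlt _ ha)
    · rcases Finset.mem_image.1 hmem' with ⟨x, _, hx⟩
      rw [← hx] at ha
      exact nu_not_lt_TB A x (hlt _ ha)

theorem lang_eq : A.lang = (GG A).lang :=
  Set.Subset.antisymm (G_complete A) (G_sound A)

end Part3

/-- For any monoids `M₀`, `M₁`, the languages of valence
automata over the free product `M₀ ∗ M₁` are contained in the algebraic
extension of `VA(M₀) ∪ VA(M₁)`. -/
theorem va_coprod_subset_alg (M₀ M₁ : Type) [Monoid M₀] [Monoid M₁] :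
    VA (Monoid.Coprod M₀ M₁) ⊆ Alg (VA M₀ ∪ VA M₁) := by
  rintro L ⟨A, rfl⟩
  exact ⟨GG A, GG_prods_classes A, lang_eq A⟩
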